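/- The sequence defined in the universal semifield ℚ_{>0}(y_1, y_2) by Y_1(0) = y_1, Y_2(0) = y_2 and the Y-system recursion Y_1(u)Y_1(u-2) = (1 + Y_2(u-1)^{-1})^{-1}, Y_2(u)Y_2(u-2) = (1 + Y_1(u-1)^{-1})^{-1} (with suitable initial data Y_1(1), Y_2(1) chosen freely as new variables) is periodic; in particular, for any positive real initial values the solution satisfies Y_i(u + 10) = Y_i(u) for all i ∈ {1,2} and u ∈ ℤ. -/

import Mathlib

theorem Ysystem_case1_periodic (Y₁ Y₂ : ℤ → ℝ)
    (hpos₁ : ∀ u, 0 < Y₁ u) (hpos₂ : ∀ u, 0 < Y₂ u)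
    (hrec₁ : ∀ u : ℤ, Y₁ u * Y₁ (u - 2) = (1 + (Y₂ (u - 1))⁻¹)⁻¹)
    (hrec₂ : ∀ u : ℤ, Y₂ u * Y₂ (u - 2) = (1 + (Y₁ (u - 1))⁻¹)⁻¹) :
    ∀ u : ℤ, Y₁ (u + 10) = Y₁ u ∧ Y₂ (u + 10) = Y₂ u := by
  have key : ∀ u : ℤ, Y₁ (u + 5) = Y₂ u ∧ Y₂ (u + 5) = Y₁ u := by
    intro u
    set p := Y₁ u with hp
    set q := Y₂ u with hq
    set r := Y₁ (u + 1) with hr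
    set s := Y₂ (u + 1) with hs
    have hp0 : p ≠ 0 := (hpos₁ u).ne'
    have hq0 : q ≠ 0 := (hpos₂ u).ne'
    have hr0 : r ≠ 0 := (hpos₁ (u + 1)).ne'
    have hs0 : s ≠ 0 := (hpos₂ (u + 1)).ne'
    have hpP : (0:ℝ) < p := hpos₁ u
    have hqP : (0:ℝ) < q := hpos₂ u
    have hrP : (0:ℝ) < r := hpos₁ (u + 1)
    have hsP : (0:ℝ) < s := hpos₂ (u + 1)
    have hp1 : (1 : ℝ) + p ≠ 0 := by nlinarith
    have hq1 : (1 : ℝ) + q ≠ 0 := by nlinarith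
    have hr1 : (1 : ℝ) + r ≠ 0 := by nlinarith
    have hs1 : (1 : ℝ) + s ≠ 0 := by nlinarith
    have hrq : r + q + r * q ≠ 0 := by nlinarith
    have hsp : s + p + s * p ≠ 0 := by nlinarith
    -- step 2
    have hA2 : Y₁ (u + 2) = s / ((1 + s) * p) := by
      have e := hrec₁ (u + 2)
      rw [show u + 2 - 2 = u by ring, show u + 2 - 1 = u + 1 by ring] at e
      rw [← hp, ← hs] at e
      field_simp at e ⊢
      linear_combination e
    have hB2 : Y₂ (u + 2) = r / ((1 + r) * q) := by
      have e := hrec₂ (u + 2)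
      rw [show u + 2 - 2 = u by ring, show u + 2 - 1 = u + 1 by ring] at e
      rw [← hq, ← hr] at e
      field_simp at e ⊢
      linear_combination e
    -- step 3
    have hA3 : Y₁ (u + 3) = 1 / (r + q + r * q) := by
      have e := hrec₁ (u + 3)
      rw [show u + 3 - 2 = u + 1 by ring, show u + 3 - 1 = u + 2 by ring] at e
      rw [← hr, hB2] at e
      have h2 : r / ((1 + r) * q) ≠ 0 := (div_pos hrP (by nlinarith)).ne'
      field_simp at e ⊢
      apply mul_left_cancel₀ hr0
      linear_combination r * e
    have hB3 : Y₂ (u + 3) = 1 / (s + p + s * p) := by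
      have e := hrec₂ (u + 3)
      rw [show u + 3 - 2 = u + 1 by ring, show u + 3 - 1 = u + 2 by ring] at e
      rw [← hs, hA2] at e
      have h2 : s / ((1 + s) * p) ≠ 0 := (div_pos hsP (by nlinarith)).ne'
      field_simp at e ⊢
      apply mul_left_cancel₀ hs0
      linear_combination s * e
    -- step 4
    have hA4 : Y₁ (u + 4) = p / ((1 + p) * s) := by
      have e := hrec₁ (u + 4)
      rw [show u + 4 - 2 = u + 2 by ring, show u + 4 - 1 = u + 3 by ring] at e
      rw [hA2, hB3] at e
      have h2 : (1 : ℝ) / (s + p + s * p) ≠ 0 := (div_pos one_pos (by nlinarith)).ne'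
      field_simp at e ⊢
      apply mul_left_cancel₀ hs1
      linear_combination e
    have hB4 : Y₂ (u + 4) = q / ((1 + q) * r) := by
      have e := hrec₂ (u + 4)
      rw [show u + 4 - 2 = u + 2 by ring, show u + 4 - 1 = u + 3 by ring] at e
      rw [hB2, hA3] at e
      have h2 : (1 : ℝ) / (r + q + r * q) ≠ 0 := (div_pos one_pos (by nlinarith)).ne'
      field_simp at e ⊢
      apply mul_left_cancel₀ hr1
      linear_combination e
    -- step 5
    constructor
    · have e := hrec₁ (u + 5)
      rw [show u + 5 - 2 = u + 3 by ring, show u + 5 - 1 = u + 4 by ring] at e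
      rw [hA3, hB4] at e
      have h2 : q / ((1 + q) * r) ≠ 0 := (div_pos hqP (by nlinarith)).ne'
      field_simp at e
      apply mul_right_cancel₀ hrq
      linear_combination e
    · have e := hrec₂ (u + 5)
      rw [show u + 5 - 2 = u + 3 by ring, show u + 5 - 1 = u + 4 by ring] at e
      rw [hB3, hA4] at e
      have h2 : p / ((1 + p) * s) ≠ 0 := (div_pos hpP (by nlinarith)).ne'
      field_simp at e
      apply mul_right_cancel₀ hsp
      linear_combination e
  intro u
  have k1 := key u
  have k2 := key (u + 5)
  rw [show u + 5 + 5 = u + 10 by ring] at k2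
  constructor
  · rw [k2.1, k1.2]
  · rw [k2.2, k1.1]
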